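/- Let O be a discrete valuation ring with uniformizer ϖ, let n ≥ 1, and let m ≥ 1 be an integer. The set of characteristic polynomials of matrices M ∈ Mₙ(O) with M − Y ∈ ϖ^m·Mₙ(O) is exactly the set of monic polynomials p ∈ O[X] of degree n all of whose coefficients of degree < n lie in ϖ^m·O. -/

import Mathlib

open Polynomial Matrix

/-- The regular nilpotent matrix `Y` with `(i, i+1)`-entries equal to `1` and all
other entries `0`. -/
def Ymat (n : ℕ) (R : Type*) [CommRing R] : Matrix (Fin n) (Fin n) R :=
  fun i j => if (j : ℕ) = (i : ℕ) + 1 then 1 else 0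

lemma charpoly_transpose' {n : ℕ} {R : Type*} [CommRing R] (M : Matrix (Fin n) (Fin n) R) :
    Mᵀ.charpoly = M.charpoly := by
  have h : charmatrix Mᵀ = (charmatrix M)ᵀ := by
    ext i j
    simp [charmatrix_apply, Matrix.transpose_apply, Matrix.diagonal_apply]
    split_ifs with h1 h2 h2 <;> simp_all [eq_comm]
  rw [Matrix.charpoly, Matrix.charpoly, h, Matrix.det_transpose]

lemma charpoly_Ymat (n : ℕ) (R : Type*) [CommRing R] : (Ymat n R).charpoly = X ^ n := by
  rw [Matrix.charpoly_of_upperTriangular]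
  · have : ∀ i : Fin n, (Ymat n R) i i = 0 := by
      intro i; simp [Ymat]
    simp [this, Finset.prod_const, Fintype.card_fin]
  · intro i j hij
    simp only [Ymat, ite_eq_right_iff]
    intro h
    exfalso
    simp only [id_eq, Fin.lt_def] at hij
    omega

lemma minpoly_adjoinRoot {O : Type*} [CommRing O] [IsDomain O] {p : O[X]} (hp : p.Monic) :
    minpoly O (AdjoinRoot.root p) = p := by
  refine (minpoly.unique' O _ hp ?_ ?_).symm
  · rw [AdjoinRoot.aeval_eq, AdjoinRoot.mk_self]
  · intro q hq
    rcases eq_or_ne q 0 with h | h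
    · exact Or.inl h
    · refine Or.inr fun hq0 => ?_
      rw [AdjoinRoot.aeval_eq, AdjoinRoot.mk_eq_zero] at hq0
      exact absurd (Polynomial.degree_le_of_dvd hq0 h) (not_le_of_gt hq)

lemma pow_modByMonic {O : Type*} [CommRing O] [IsDomain O] {p : O[X]} (hp : p.Monic)
    {k : ℕ} (hk : k + 1 < p.natDegree) : (X : O[X]) ^ (k + 1) %ₘ p = X ^ (k + 1) := by
  rw [Polynomial.modByMonic_eq_self_iff hp]
  calc ((X : O[X]) ^ (k + 1)).degree = (k + 1 : ℕ) := by simp [Polynomial.degree_X_pow]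
  _ < p.degree := by
      rw [Polynomial.degree_eq_natDegree hp.ne_zero]
      exact_mod_cast hk

lemma top_pow_modByMonic {O : Type*} [CommRing O] [IsDomain O] {p : O[X]} (hp : p.Monic)
    (hn : 1 ≤ p.natDegree) : (X : O[X]) ^ p.natDegree %ₘ p = X ^ p.natDegree - p := by
  have hdeg : ((X : O[X]) ^ p.natDegree - p).degree < ((X : O[X]) ^ p.natDegree).degree := by
    apply Polynomial.degree_sub_lt
    · rw [Polynomial.degree_X_pow, Polynomial.degree_eq_natDegree hp.ne_zero]
    · exact pow_ne_zero _ Polynomial.X_ne_zero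
    · simp [Polynomial.Monic.leadingCoeff hp]
  have h1 : ((X : O[X]) ^ p.natDegree - p) %ₘ p = X ^ p.natDegree - p := by
    rw [Polynomial.modByMonic_eq_self_iff hp]
    refine hdeg.trans_le ?_
    rw [Polynomial.degree_X_pow, Polynomial.degree_eq_natDegree hp.ne_zero]
  have h2 : p %ₘ p = 0 := (Polynomial.modByMonic_eq_zero_iff_dvd hp).2 dvd_rfl
  have := Polynomial.sub_modByMonic (q := p) ((X : O[X]) ^ p.natDegree) p
  rw [h2, sub_zero, h1] at this
  exact this.symm

/-- Let `O` be a discrete valuation ring with uniformizer `ϖ`, let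
`n ≥ 1` and `m ≥ 1`. A polynomial `p ∈ O[X]` is the characteristic polynomial of some
`M ∈ Mₙ(O)` with `M - Y ∈ ϖ^m·Mₙ(O)` if and only if `p` is monic of degree `n` and all
its coefficients of degree `< n` lie in `ϖ^m·O`. -/
theorem stmt7 {O : Type*} [CommRing O] [IsDomain O] [IsDiscreteValuationRing O]
    (ϖ : O) (hϖ : Irreducible ϖ)
    (n : ℕ) (hn : 1 ≤ n) (m : ℕ) (hm : 1 ≤ m) (p : Polynomial O) :
    (∃ M : Matrix (Fin n) (Fin n) O,
        (∀ i j : Fin n, ϖ ^ m ∣ (M - Ymat n O) i j) ∧ M.charpoly = p) ↔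
      (p.Monic ∧ p.natDegree = n ∧ ∀ i < n, ϖ ^ m ∣ p.coeff i) := by
  constructor
  · rintro ⟨M, hM, rfl⟩
    refine ⟨M.charpoly_monic, by simp, ?_⟩
    intro i hi
    set I : Ideal O := Ideal.span {ϖ ^ m}
    set f : O →+* O ⧸ I := Ideal.Quotient.mk I
    have hMf : M.map f = Ymat n (O ⧸ I) := by
      ext a b
      have := hM a b
      have hz : f ((M - Ymat n O) a b) = 0 := by
        rw [Ideal.Quotient.eq_zero_iff_mem, Ideal.mem_span_singleton]
        exact this
      have : f (M a b) = f (Ymat n O a b) := by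
        rw [Matrix.sub_apply, map_sub, sub_eq_zero] at hz
        exact hz
      rw [Matrix.map_apply, this]
      simp [Ymat, apply_ite f]
    have hmap : (M.charpoly).map f = X ^ n := by
      rw [← Matrix.charpoly_map, hMf, charpoly_Ymat]
    have : f (M.charpoly.coeff i) = 0 := by
      have := congrArg (fun q => Polynomial.coeff q i) hmap
      simpa [Polynomial.coeff_map, Polynomial.coeff_X_pow, hi.ne] using this
    rwa [Ideal.Quotient.eq_zero_iff_mem, Ideal.mem_span_singleton] at this
  · rintro ⟨hmonic, hdeg, hcoeff⟩
    subst hdeg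
    set N := p.natDegree with hN
    set B : Matrix (Fin N) (Fin N) O :=
      Algebra.leftMulMatrix (AdjoinRoot.powerBasis' hmonic).basis (AdjoinRoot.root p) with hB
    have hBentry : ∀ i j : Fin N, B i j = ((X : O[X]) ^ ((j : ℕ) + 1) %ₘ p).coeff i := by
      intro i j
      rw [hB]; revert i j
      show ∀ i j : Fin (AdjoinRoot.powerBasis' hmonic).dim, Algebra.leftMulMatrix (AdjoinRoot.powerBasis' hmonic).basis (AdjoinRoot.root p) i j = ((X : O[X]) ^ ((j : ℕ) + 1) %ₘ p).coeff i
      intro i j; rw [Algebra.leftMulMatrix_eq_repr_mul]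
      have hbasis : (AdjoinRoot.powerBasis' hmonic).basis j
          = AdjoinRoot.root p ^ (j : ℕ) := (AdjoinRoot.powerBasis' hmonic).basis_eq_pow j
      rw [hbasis]
      have : AdjoinRoot.root p * AdjoinRoot.root p ^ (j : ℕ)
          = AdjoinRoot.mk p (X ^ ((j : ℕ) + 1)) := by
        rw [map_pow, AdjoinRoot.mk_X, pow_succ, mul_comm]
      rw [this]
      have : (AdjoinRoot.powerBasis' hmonic).basis.repr (AdjoinRoot.mk p (X ^ ((j : ℕ) + 1))) i
          = (AdjoinRoot.modByMonicHom hmonic (AdjoinRoot.mk p (X ^ ((j : ℕ) + 1)))).coeff i := rfl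
      rw [this, AdjoinRoot.modByMonicHom_mk]
    refine ⟨Bᵀ, ?_, ?_⟩
    · intro i j
      rw [Matrix.sub_apply, Matrix.transpose_apply, hBentry]
      rcases lt_or_eq_of_le (Nat.succ_le_of_lt i.isLt) with h | h
    -- case (i:ℕ)+1 < N
      · rw [pow_modByMonic hmonic (by omega)]
        have : ((X : O[X]) ^ ((i : ℕ) + 1)).coeff j = Ymat N O i j := by
          simp [Polynomial.coeff_X_pow, Ymat, eq_comm]
        rw [this, sub_self]
        exact dvd_zero _
      · have h' : (i : ℕ) + 1 = N := h
        rw [h', top_pow_modByMonic hmonic (by omega)]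
        have hY : Ymat N O i j = 0 := by
          simp only [Ymat, ite_eq_right_iff]
          intro hj; omega
        have hc : ((X : O[X]) ^ N - p).coeff j = -p.coeff j := by
          rw [Polynomial.coeff_sub, Polynomial.coeff_X_pow]
          have : ((j : ℕ) = N) = False := by simp [j.isLt.ne]
          simp [this]
        rw [hY, hc, sub_zero]
        exact (dvd_neg).2 (hcoeff j j.isLt)
    · have hcp := charpoly_leftMulMatrix (AdjoinRoot.powerBasis' hmonic)
      rw [AdjoinRoot.powerBasis'_gen] at hcp
      rw [charpoly_transpose', hB]; exact hcp.trans (minpoly_adjoinRoot hmonic)
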